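/- Let A be an m×n complex matrix with M (m×m) and N (n×n) Hermitian positive definite. Define A^# = N^{-1} A* M. Then A†_{M,N} = lim_{λ → 0+} A^# (λI + A A^#)^{-1}. -/

import Mathlib

open Matrix Filter Topology
open scoped ComplexOrder

/-- The four equations characterizing the weighted Moore-Penrose inverse of `A`
with respect to the weights `(M, N)`. -/
def IsWMP {m n : ℕ} (M : Matrix (Fin m) (Fin m) ℂ) (N : Matrix (Fin n) (Fin n) ℂ)
    (A : Matrix (Fin m) (Fin n) ℂ) (X : Matrix (Fin n) (Fin m) ℂ) : Prop :=
  A * X * A = A ∧ X * A * X = X ∧ (M * A * X)ᴴ = M * A * X ∧ (N * X * A)ᴴ = N * X * A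

private lemma smul_posDef {k : ℕ} {c : ℝ} (hc : 0 < c) {P : Matrix (Fin k) (Fin k) ℂ}
    (hP : P.PosDef) : ((c : ℂ) • P).PosDef := by
  refine ⟨?_, fun x hx => ?_⟩
  · show ((c : ℂ) • P)ᴴ = (c : ℂ) • P
    rw [conjTranspose_smul, hP.1.eq]
    norm_num
  · have hc' : (0 : ℂ) < (c : ℂ) := by
      rw [Complex.zero_lt_real]; exact hc
    exact (hP.smul hc').2 hx

/-- The key abstract limit: if `X * (A * B) = B`, `D * B = X`, and `lam • 1 + A * B`
is invertible for every `lam > 0`, then `B * (lam • 1 + A * B)⁻¹ → X` as `lam → 0⁺`. -/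
private lemma key_tendsto {m n : ℕ} (A : Matrix (Fin m) (Fin n) ℂ)
    (B X : Matrix (Fin n) (Fin m) ℂ) (D : Matrix (Fin n) (Fin n) ℂ)
    (hb : X * (A * B) = B) (ha : D * B = X)
    (hKunit : ∀ lam : ℝ, 0 < lam →
      IsUnit ((lam : ℂ) • (1 : Matrix (Fin m) (Fin m) ℂ) + A * B).det) :
    Tendsto (fun lam : ℝ =>
        B * ((lam : ℂ) • (1 : Matrix (Fin m) (Fin m) ℂ) + A * B)⁻¹)
      (𝓝[>] (0 : ℝ)) (𝓝 X) := by
  set g : ℝ → Matrix (Fin n) (Fin m) ℂ := fun lam =>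
    X - ((1 : Matrix (Fin n) (Fin n) ℂ) + (lam : ℂ) • D)⁻¹ * ((lam : ℂ) • (D * X)) with hg
  have hUcont : Tendsto (fun lam : ℝ => (1 : Matrix (Fin n) (Fin n) ℂ) + (lam : ℂ) • D)
      (𝓝 0) (𝓝 1) := by
    have hcont : Continuous (fun lam : ℝ => (1 : Matrix (Fin n) (Fin n) ℂ) + (lam : ℂ) • D) :=
      continuous_const.add (Complex.continuous_ofReal.smul continuous_const)
    simpa using hcont.tendsto 0
  have hinvcont : Tendsto (fun lam : ℝ => ((1 : Matrix (Fin n) (Fin n) ℂ) + (lam : ℂ) • D)⁻¹)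
      (𝓝 0) (𝓝 1) := by
    have hCA : ContinuousAt Inv.inv (1 : Matrix (Fin n) (Fin n) ℂ) := by
      apply continuousAt_matrix_inv
      have : ContinuousAt (fun z : ℂ => Ring.inverse z) (det (1 : Matrix (Fin n) (Fin n) ℂ)) := by
        simp only [Ring.inverse_eq_inv']
        exact continuousAt_inv₀ (by simp)
      exact this
    have := hCA.tendsto.comp hUcont
    simpa [Function.comp_def] using this
  have hgt : Tendsto g (𝓝 0) (𝓝 X) := by
    have hsm : Tendsto (fun lam : ℝ => (lam : ℂ) • (D * X)) (𝓝 0)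
        (𝓝 (0 : Matrix (Fin n) (Fin m) ℂ)) := by
      have hcont : Continuous (fun lam : ℝ => (lam : ℂ) • (D * X)) :=
        Complex.continuous_ofReal.smul continuous_const
      simpa using hcont.tendsto 0
    have hmulc : Continuous (fun p : Matrix (Fin n) (Fin n) ℂ × Matrix (Fin n) (Fin m) ℂ =>
        p.1 * p.2) := continuous_fst.matrix_mul continuous_snd
    have hprod : Tendsto (fun lam : ℝ =>
        ((((1 : Matrix (Fin n) (Fin n) ℂ) + (lam : ℂ) • D)⁻¹), ((lam : ℂ) • (D * X))))
        (𝓝 0) (𝓝 ((1 : Matrix (Fin n) (Fin n) ℂ), (0 : Matrix (Fin n) (Fin m) ℂ))) :=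
      hinvcont.prodMk_nhds hsm
    have hmul : Tendsto (fun lam : ℝ =>
        ((1 : Matrix (Fin n) (Fin n) ℂ) + (lam : ℂ) • D)⁻¹ * ((lam : ℂ) • (D * X)))
        (𝓝 0) (𝓝 (0 : Matrix (Fin n) (Fin m) ℂ)) := by
      have h := (hmulc.continuousAt (x := ((1 : Matrix (Fin n) (Fin n) ℂ),
        (0 : Matrix (Fin n) (Fin m) ℂ)))).tendsto.comp hprod
      simp only [Function.comp_def] at h
      simpa only [Matrix.one_mul] using h
    have hsub : Tendsto (fun lam : ℝ =>
        X - ((1 : Matrix (Fin n) (Fin n) ℂ) + (lam : ℂ) • D)⁻¹ * ((lam : ℂ) • (D * X)))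
        (𝓝 0) (𝓝 (X - 0)) := tendsto_const_nhds.sub hmul
    rw [hg]
    simpa using hsub
  have hdetne : ∀ᶠ lam : ℝ in 𝓝 0,
      ((1 : Matrix (Fin n) (Fin n) ℂ) + (lam : ℂ) • D).det ≠ 0 := by
    have hcont : Tendsto (fun lam : ℝ => ((1 : Matrix (Fin n) (Fin n) ℂ) + (lam : ℂ) • D).det)
        (𝓝 0) (𝓝 (1 : ℂ)) := by
      have := (continuous_id.matrix_det.continuousAt
        (x := (1 : Matrix (Fin n) (Fin n) ℂ))).tendsto.comp hUcont
      simpa [Function.comp_def] using this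
    exact hcont.eventually_ne one_ne_zero
  have heq : g =ᶠ[𝓝[>] (0 : ℝ)] (fun lam : ℝ =>
      B * ((lam : ℂ) • (1 : Matrix (Fin m) (Fin m) ℂ) + A * B)⁻¹) := by
    filter_upwards [self_mem_nhdsWithin, nhdsWithin_le_nhds hdetne] with lam hlam hdet
    have hlam' : (0 : ℝ) < lam := hlam
    set c : ℂ := (lam : ℂ) with hc
    set K : Matrix (Fin m) (Fin m) ℂ := c • 1 + A * B with hK
    have hKu : IsUnit K.det := hKunit lam hlam'
    have hKK : K * K⁻¹ = 1 := mul_nonsing_inv K hKu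
    set U : Matrix (Fin n) (Fin n) ℂ := 1 + c • D with hU
    have hUu : IsUnit U.det := isUnit_iff_ne_zero.mpr hdet
    have hUU : U⁻¹ * U = 1 := nonsing_inv_mul U hUu
    have hXK : X * K = c • X + B := by
      rw [hK, Matrix.mul_add, Matrix.mul_smul, Matrix.mul_one, hb]
    have hXd : X = c • (X * K⁻¹) + B * K⁻¹ := by
      calc X = X * (K * K⁻¹) := by rw [hKK, Matrix.mul_one]
        _ = (X * K) * K⁻¹ := by rw [Matrix.mul_assoc]
        _ = (c • X + B) * K⁻¹ := by rw [hXK]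
        _ = c • (X * K⁻¹) + B * K⁻¹ := by rw [Matrix.add_mul, Matrix.smul_mul]
    set G : Matrix (Fin n) (Fin m) ℂ := c • (X * K⁻¹) with hGdef
    have hBK : B * K⁻¹ = X - G := by
      rw [eq_sub_iff_add_eq, add_comm]
      exact hXd.symm
    have hGexp : G = c • (D * X) - c • (D * G) := by
      calc G = c • ((D * B) * K⁻¹) := by rw [ha]
        _ = c • (D * (B * K⁻¹)) := by rw [Matrix.mul_assoc]
        _ = c • (D * (X - G)) := by rw [hBK]
        _ = c • (D * X) - c • (D * G) := by rw [Matrix.mul_sub, smul_sub]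
    have hUG : U * G = c • (D * X) := by
      calc U * G = G + c • (D * G) := by
            rw [hU, Matrix.add_mul, Matrix.one_mul, Matrix.smul_mul]
        _ = (c • (D * X) - c • (D * G)) + c • (D * G) := by rw [← hGexp]
        _ = c • (D * X) := by abel
    have hGval : G = U⁻¹ * (c • (D * X)) := by
      calc G = (U⁻¹ * U) * G := by rw [hUU, Matrix.one_mul]
        _ = U⁻¹ * (U * G) := by rw [Matrix.mul_assoc]
        _ = U⁻¹ * (c • (D * X)) := by rw [hUG]
    show X - U⁻¹ * (c • (D * X)) = B * K⁻¹
    rw [hBK, hGval]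
  exact (hgt.mono_left nhdsWithin_le_nhds).congr' heq

/-- A†_{M,N} = lim_{λ→0+} A^# (λI + A A^#)⁻¹, with A^# = N⁻¹ A* M. -/
theorem stmt_3 {m n : ℕ} (A : Matrix (Fin m) (Fin n) ℂ)
    (M : Matrix (Fin m) (Fin m) ℂ) (N : Matrix (Fin n) (Fin n) ℂ)
    (hM : M.PosDef) (hN : N.PosDef)
    (X : Matrix (Fin n) (Fin m) ℂ) (hX : IsWMP M N A X) :
    Tendsto
      (fun lam : ℝ =>
        (N⁻¹ * Aᴴ * M) * ((lam : ℂ) • (1 : Matrix (Fin m) (Fin m) ℂ) + A * (N⁻¹ * Aᴴ * M))⁻¹)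
      (𝓝[>] (0 : ℝ)) (𝓝 X) := by
  obtain ⟨h1, h2, h3, h4⟩ := hX
  have hMdet : IsUnit M.det := hM.det_pos.ne'.isUnit
  have hNdet : IsUnit N.det := hN.det_pos.ne'.isUnit
  have hMM : M⁻¹ * M = 1 := nonsing_inv_mul M hMdet
  have hNN : N⁻¹ * N = 1 := nonsing_inv_mul N hNdet
  have hNN2 : N * N⁻¹ = 1 := mul_nonsing_inv N hNdet
  have hMH : Mᴴ = M := hM.1
  have hNH : Nᴴ = N := hN.1
  have key3 : Xᴴ * (Aᴴ * M) = M * A * X := by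
    have h := h3
    rw [conjTranspose_mul, conjTranspose_mul, hMH] at h
    exact h
  have key4 : Aᴴ * (Xᴴ * N) = N * X * A := by
    have h := h4
    rw [conjTranspose_mul, conjTranspose_mul, hNH] at h
    exact h
  have hb : X * (A * (N⁻¹ * Aᴴ * M)) = N⁻¹ * Aᴴ * M := by
    calc X * (A * (N⁻¹ * Aᴴ * M))
        = (N⁻¹ * N) * (X * (A * (N⁻¹ * Aᴴ * M))) := by rw [hNN, Matrix.one_mul]
      _ = N⁻¹ * ((N * X * A) * (N⁻¹ * Aᴴ * M)) := by simp only [Matrix.mul_assoc]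
      _ = N⁻¹ * ((Aᴴ * (Xᴴ * N)) * (N⁻¹ * Aᴴ * M)) := by rw [key4]
      _ = N⁻¹ * (Aᴴ * (Xᴴ * ((N * N⁻¹) * (Aᴴ * M)))) := by simp only [Matrix.mul_assoc]
      _ = N⁻¹ * (Aᴴ * (Xᴴ * (Aᴴ * M))) := by rw [hNN2, Matrix.one_mul]
      _ = N⁻¹ * ((A * X * A)ᴴ * M) := by
            rw [conjTranspose_mul, conjTranspose_mul]
            simp only [Matrix.mul_assoc]
      _ = N⁻¹ * Aᴴ * M := by rw [h1, Matrix.mul_assoc]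
  have ha : (X * M⁻¹ * Xᴴ * N) * (N⁻¹ * Aᴴ * M) = X := by
    calc (X * M⁻¹ * Xᴴ * N) * (N⁻¹ * Aᴴ * M)
        = X * (M⁻¹ * (Xᴴ * ((N * N⁻¹) * (Aᴴ * M)))) := by simp only [Matrix.mul_assoc]
      _ = X * (M⁻¹ * (Xᴴ * (Aᴴ * M))) := by rw [hNN2, Matrix.one_mul]
      _ = X * (M⁻¹ * (M * A * X)) := by rw [key3]
      _ = X * ((M⁻¹ * M) * (A * X)) := by simp only [Matrix.mul_assoc]
      _ = X * (A * X) := by rw [hMM, Matrix.one_mul]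
      _ = X := by rw [← Matrix.mul_assoc]; exact h2
  have hKunit : ∀ lam : ℝ, 0 < lam →
      IsUnit ((lam : ℂ) • (1 : Matrix (Fin m) (Fin m) ℂ) + A * (N⁻¹ * Aᴴ * M)).det := by
    intro lam hlam
    have hMK : M * ((lam : ℂ) • (1 : Matrix (Fin m) (Fin m) ℂ) + A * (N⁻¹ * Aᴴ * M))
        = (lam : ℂ) • M + (Aᴴ * M)ᴴ * N⁻¹ * (Aᴴ * M) := by
      rw [Matrix.mul_add, Matrix.mul_smul, Matrix.mul_one, conjTranspose_mul,
        conjTranspose_conjTranspose, hMH]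
      simp only [Matrix.mul_assoc]
    have hposd : (M * ((lam : ℂ) • (1 : Matrix (Fin m) (Fin m) ℂ)
        + A * (N⁻¹ * Aᴴ * M))).PosDef := by
      rw [hMK]
      exact (smul_posDef hlam hM).add_posSemidef
        ((hN.inv.posSemidef).conjTranspose_mul_mul_same (Aᴴ * M))
    have hud : IsUnit (M.det *
        ((lam : ℂ) • (1 : Matrix (Fin m) (Fin m) ℂ) + A * (N⁻¹ * Aᴴ * M)).det) := by
      rw [← det_mul]
      exact hposd.det_pos.ne'.isUnit
    exact isUnit_of_mul_isUnit_right hud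
  exact key_tendsto A (N⁻¹ * Aᴴ * M) X (X * M⁻¹ * Xᴴ * N) hb ha hKunit
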